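/- Let ω be the standard symplectic form on F_q^{2d} and q sufficiently large. Let A, B be k-dimensional isotropic subspaces with dim(A) = dim(B) = k. Then there is a randomized choice of a (k−1)-dimensional subspace A' ⊆ A and a vector b ∈ B such that A' + span(b) is an isotropic subspace, and for every d_0-dimensional subspace C such that A + C and B + C are both (d_0 + k)-dimensional isotropic subspaces, the probability that dim(A' + span(b) + C) = d_0 + k is at least 1 − O(1/q). -/

import Mathlib

open Module

/-- The standard symplectic form on `F^{2d}`. -/
def sympForm (F : Type) [Field F] (d : ℕ) (x y : (Fin d ⊕ Fin d) → F) : F :=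
  ∑ i : Fin d, (x (Sum.inl i) * y (Sum.inr i) - x (Sum.inr i) * y (Sum.inl i))

/-- A subspace is isotropic if the symplectic form vanishes identically on it. -/
def IsIsotropic (F : Type) [Field F] (d : ℕ)
    (W : Submodule F ((Fin d ⊕ Fin d) → F)) : Prop :=
  ∀ x ∈ W, ∀ y ∈ W, sympForm F d x y = 0

section aux
variable {F : Type} [Field F] {d : ℕ}

lemma sympForm_add_left (x y z : (Fin d ⊕ Fin d) → F) :
    sympForm F d (x + y) z = sympForm F d x z + sympForm F d y z := by
  simp only [sympForm, Pi.add_apply, ← Finset.sum_add_distrib]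
  exact Finset.sum_congr rfl fun i _ => by ring

lemma sympForm_smul_left (c : F) (x z : (Fin d ⊕ Fin d) → F) :
    sympForm F d (c • x) z = c * sympForm F d x z := by
  simp only [sympForm, Pi.smul_apply, smul_eq_mul, Finset.mul_sum]
  exact Finset.sum_congr rfl fun i _ => by ring

lemma sympForm_add_right (x y z : (Fin d ⊕ Fin d) → F) :
    sympForm F d x (y + z) = sympForm F d x y + sympForm F d x z := by
  simp only [sympForm, Pi.add_apply, ← Finset.sum_add_distrib]
  exact Finset.sum_congr rfl fun i _ => by ring

lemma sympForm_smul_right (c : F) (x z : (Fin d ⊕ Fin d) → F) :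
    sympForm F d x (c • z) = c * sympForm F d x z := by
  simp only [sympForm, Pi.smul_apply, smul_eq_mul, Finset.mul_sum]
  exact Finset.sum_congr rfl fun i _ => by ring

lemma sympForm_self (x : (Fin d ⊕ Fin d) → F) : sympForm F d x x = 0 :=
  Finset.sum_eq_zero fun i _ => by ring

lemma sympForm_neg_swap (x y : (Fin d ⊕ Fin d) → F) :
    sympForm F d x y = - sympForm F d y x := by
  simp only [sympForm, ← Finset.sum_neg_distrib]
  exact Finset.sum_congr rfl fun i _ => by ring

/-- bilinear version -/
noncomputable def sympBilin (F : Type) [Field F] (d : ℕ) :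
    ((Fin d ⊕ Fin d) → F) →ₗ[F] ((Fin d ⊕ Fin d) → F) →ₗ[F] F :=
  LinearMap.mk₂ F (sympForm F d) sympForm_add_left sympForm_smul_left
    sympForm_add_right sympForm_smul_right

@[simp] lemma sympBilin_apply (x y : (Fin d ⊕ Fin d) → F) :
    sympBilin F d x y = sympForm F d x y := rfl

end aux
section aux2
variable {F : Type} [Field F] {d : ℕ}

lemma isIsotropic_mono {W W' : Submodule F ((Fin d ⊕ Fin d) → F)} (h : W ≤ W')
    (hW' : IsIsotropic F d W') : IsIsotropic F d W :=
  fun x hx y hy => hW' x (h hx) y (h hy)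

lemma isIsotropic_sup_span {A' : Submodule F ((Fin d ⊕ Fin d) → F)} {b : (Fin d ⊕ Fin d) → F}
    (hA' : IsIsotropic F d A') (hb : sympForm F d b b = 0)
    (h : ∀ a ∈ A', sympForm F d a b = 0) :
    IsIsotropic F d (A' ⊔ Submodule.span F {b}) := by
  intro x hx y hy
  rw [Submodule.mem_sup] at hx hy
  obtain ⟨a1, ha1, z1, hz1, rfl⟩ := hx
  obtain ⟨a2, ha2, z2, hz2, rfl⟩ := hy
  rw [Submodule.mem_span_singleton] at hz1 hz2
  obtain ⟨s, rfl⟩ := hz1; obtain ⟨t, rfl⟩ := hz2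
  have h21 : sympForm F d b a2 = - sympForm F d a2 b := sympForm_neg_swap _ _
  rw [sympForm_add_left, sympForm_add_right, sympForm_add_right, sympForm_smul_right,
    sympForm_smul_left, sympForm_smul_left, sympForm_smul_right, hA' a1 ha1 a2 ha2,
    h a1 ha1, hb, h21, h a2 ha2]
  ring

/-- kernel of a nonzero functional has corank 1 -/
lemma finrank_ker_functional {M : Type*} [AddCommGroup M] [Module F M] [FiniteDimensional F M]
    (f : M →ₗ[F] F) (hf : f ≠ 0) :
    finrank F (LinearMap.ker f) = finrank F M - 1 := by
  have hr : LinearMap.range f = ⊤ := by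
    obtain ⟨x, hx⟩ : ∃ x, f x ≠ 0 := by
      by_contra h
      push_neg at h
      exact hf (LinearMap.ext fun x => h x)
    rw [eq_top_iff]
    intro c _
    exact ⟨(c * (f x)⁻¹) • x, by simp [mul_assoc, inv_mul_cancel₀ hx]⟩
  have := LinearMap.finrank_range_add_finrank_ker f
  rw [hr, finrank_top] at this
  have h1 : finrank F F = 1 := finrank_self F
  omega

end aux2
section aux3

lemma sum_ite_fiber {W X : Type*} [Fintype W] [Fintype X] [DecidableEq X]
    (G : W → X) (p : X → Prop) [DecidablePred p] :
    (∑ x : X, (if p x then ((Finset.univ.filter fun w => G w = x).card : ℝ) else 0))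
      = ((Finset.univ.filter fun w => p (G w)).card : ℝ) := by
  have h1 : ∀ x : X, (if p x then ((Finset.univ.filter fun w => G w = x).card : ℝ) else 0)
      = ∑ w : W, (if G w = x then (if p x then (1:ℝ) else 0) else 0) := by
    intro x
    by_cases hp : p x
    · simp only [hp, if_true, Finset.card_filter]
      push_cast
      rfl
    · simp [hp]
  rw [Finset.sum_congr rfl fun x _ => h1 x, Finset.sum_comm]
  have h2 : ∀ w : W, (∑ x : X, if G w = x then (if p x then (1:ℝ) else 0) else 0)
      = (if p (G w) then (1:ℝ) else 0) := by
    intro w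
    rw [Finset.sum_ite_eq]
    simp
  rw [Finset.sum_congr rfl fun w _ => h2 w, Finset.card_filter]
  push_cast
  rfl

instance {F M : Type*} [Semiring F] [AddCommMonoid M] [Module F M] [Finite M] :
    Finite (Submodule F M) :=
  Finite.of_injective (fun s => (s : Set M)) SetLike.coe_injective

end aux3
section master
variable {F : Type} [Field F] [Fintype F]

lemma master {q d k d₀ : ℕ}
    (hq : Fintype.card F = q) (hk : 1 ≤ k)
    (A B : Submodule F ((Fin d ⊕ Fin d) → F))
    (hA : IsIsotropic F d A) (hB : IsIsotropic F d B)
    (hAk : finrank F A = k)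
    (b₀ : (Fin d ⊕ Fin d) → F) (hb₀B : b₀ ∈ B) (hb₀0 : b₀ ≠ 0)
    (Φ : (Fin k → F) → (A →ₗ[F] F))
    (hΦ : ∀ w, Φ w ≠ 0)
    (hiso : ∀ w, ∀ y : A, Φ w y = 0 → sympForm F d (y : (Fin d ⊕ Fin d) → F) b₀ = 0)
    (hgood : ∀ C : Submodule F ((Fin d ⊕ Fin d) → F), finrank F C = d₀ →
        IsIsotropic F d (A ⊔ C) → finrank F ↥(A ⊔ C) = d₀ + k →
        IsIsotropic F d (B ⊔ C) → finrank F ↥(B ⊔ C) = d₀ + k →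
        ∃ ψ : (Fin k → F) →ₗ[F] F, ψ ≠ 0 ∧
          ∀ w, b₀ ∈ (Submodule.map A.subtype (LinearMap.ker (Φ w)) ⊔ C) → ψ w = 0) :
    ∃ P : Submodule F ((Fin d ⊕ Fin d) → F) × ((Fin d ⊕ Fin d) → F) → ℝ,
      (∀ x, 0 ≤ P x) ∧
      (∑ᶠ x : Submodule F ((Fin d ⊕ Fin d) → F) × ((Fin d ⊕ Fin d) → F), P x) = 1 ∧
      (∀ A' b, P (A', b) ≠ 0 →
        A' ≤ A ∧ finrank F A' = k - 1 ∧ b ∈ B ∧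
        IsIsotropic F d (A' ⊔ Submodule.span F {b})) ∧
      (∀ C : Submodule F ((Fin d ⊕ Fin d) → F), finrank F C = d₀ →
        IsIsotropic F d (A ⊔ C) → finrank F ↥(A ⊔ C) = d₀ + k →
        IsIsotropic F d (B ⊔ C) → finrank F ↥(B ⊔ C) = d₀ + k →
        1 - 1 / (q : ℝ) ≤
          ∑ᶠ x : Submodule F ((Fin d ⊕ Fin d) → F) × ((Fin d ⊕ Fin d) → F),
            if finrank F ↥(x.1 ⊔ Submodule.span F {x.2} ⊔ C) = d₀ + k
              then P x else 0) := by
  classical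
  have hq1 : 1 ≤ q := hq ▸ Fintype.card_pos
  have hq0R : (q : ℝ) ≠ 0 := by positivity
  set X := Submodule F ((Fin d ⊕ Fin d) → F) × ((Fin d ⊕ Fin d) → F) with hX
  haveI : Fintype X := Fintype.ofFinite X
  set A' : (Fin k → F) → Submodule F ((Fin d ⊕ Fin d) → F) :=
    fun w => Submodule.map A.subtype (LinearMap.ker (Φ w)) with hA'def
  set G : (Fin k → F) → X := fun w => (A' w, b₀) with hGdef
  have cardW : Fintype.card (Fin k → F) = q ^ k := by
    rw [Fintype.card_fun, hq, Fintype.card_fin]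
  set N : ℝ := (q : ℝ) ^ k with hN
  have hN0 : (0:ℝ) < N := by positivity
  refine ⟨fun x => ((Finset.univ.filter fun w => G w = x).card : ℝ) / N, ?_, ?_, ?_, ?_⟩
  · intro x
    positivity
  · rw [finsum_eq_sum_of_fintype]
    rw [← Finset.sum_div]
    have := sum_ite_fiber G (fun _ : X => True)
    simp only [if_true] at this
    rw [this]
    simp only [Finset.filter_true_of_mem (fun _ _ => trivial)]
    rw [Finset.card_univ, cardW]
    push_cast
    field_simp
    exact hN.symm
  · intro A'' b hP
    have hne : (Finset.univ.filter fun w => G w = (A'', b)).Nonempty := by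
      rw [Finset.nonempty_iff_ne_empty]
      intro h
      apply hP
      show ((Finset.univ.filter fun w => G w = (A'', b)).card : ℝ) / N = 0
      rw [h]
      simp
    obtain ⟨w, hw⟩ := hne
    rw [Finset.mem_filter] at hw
    have hGw : G w = (A'', b) := hw.2
    have hA'eq : A' w = A'' := congrArg Prod.fst hGw
    have hbeq : b₀ = b := congrArg Prod.snd hGw
    subst hA'eq hbeq
    refine ⟨Submodule.map_subtype_le A _, ?_, hb₀B, ?_⟩
    · rw [Submodule.finrank_map_subtype_eq, finrank_ker_functional _ (hΦ w), hAk]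
    · refine isIsotropic_sup_span (isIsotropic_mono (Submodule.map_subtype_le A _) hA)
        (hB b₀ hb₀B b₀ hb₀B) ?_
      intro a ha
      obtain ⟨y, hy, rfl⟩ := Submodule.mem_map.mp ha
      exact hiso w y (LinearMap.mem_ker.mp hy)
  · intro C hC hACiso hACrank hBCiso hBCrank
    obtain ⟨ψ, hψ0, hψ⟩ := hgood C hC hACiso hACrank hBCiso hBCrank
    -- A ⊓ C = ⊥
    have hAC : A ⊓ C = ⊥ := by
      have h1 := Submodule.finrank_sup_add_finrank_inf_eq A C
      rw [hACrank, hAk, hC] at h1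
      have : finrank F ↥(A ⊓ C) = 0 := by omega
      exact Submodule.finrank_eq_zero.mp this
    -- event holds whenever ψ w ≠ 0
    have hev : ∀ w, ψ w ≠ 0 →
        finrank F ↥(A' w ⊔ Submodule.span F {b₀} ⊔ C) = d₀ + k := by
      intro w hw
      have hb₀not : b₀ ∉ A' w ⊔ C := fun hmem => hw (hψ w hmem)
      have hA'C : A' w ⊓ C = ⊥ := by
        rw [← le_bot_iff, ← hAC]
        exact inf_le_inf_right C (Submodule.map_subtype_le A _)
      have hrank1 : finrank F ↥(A' w ⊔ C) = (k - 1) + d₀ := by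
        have h1 := Submodule.finrank_sup_add_finrank_inf_eq (A' w) C
        rw [hA'C, hC] at h1
        have h2 : finrank F ↥(A' w) = k - 1 := by
          rw [hA'def]
          rw [Submodule.finrank_map_subtype_eq, finrank_ker_functional _ (hΦ w), hAk]
        rw [h2] at h1
        simpa using h1
      have hsp : (A' w ⊔ C) ⊓ Submodule.span F {b₀} = ⊥ := by
        rw [eq_bot_iff]
        intro v hv
        obtain ⟨hv1, hv2⟩ := Submodule.mem_inf.mp hv
        obtain ⟨t, rfl⟩ := Submodule.mem_span_singleton.mp hv2
        rcases eq_or_ne t 0 with rfl | ht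
        · simp
        · exfalso
          exact hb₀not (by
            have := Submodule.smul_mem _ t⁻¹ hv1
            rwa [smul_smul, inv_mul_cancel₀ ht, one_smul] at this)
      have hre : A' w ⊔ Submodule.span F {b₀} ⊔ C = (A' w ⊔ C) ⊔ Submodule.span F {b₀} := by
        rw [sup_assoc, sup_comm (Submodule.span F {b₀}) C, ← sup_assoc]
      rw [hre]
      have h3 := Submodule.finrank_sup_add_finrank_inf_eq (A' w ⊔ C) (Submodule.span F {b₀})
      rw [hsp, hrank1, finrank_span_singleton hb₀0] at h3
      simp only [finrank_bot, add_zero] at h3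
      omega
    -- counting
    set p : X → Prop := fun x => finrank F ↥(x.1 ⊔ Submodule.span F {x.2} ⊔ C) = d₀ + k with hpdef
    rw [finsum_eq_sum_of_fintype]
    have hsplit : ∀ x : X, (if p x then
        ((Finset.univ.filter fun w => G w = x).card : ℝ) / N else 0)
        = (if p x then ((Finset.univ.filter fun w => G w = x).card : ℝ) else 0) / N := by
      intro x; split <;> simp
    rw [Finset.sum_congr rfl fun x _ => hsplit x, ← Finset.sum_div, sum_ite_fiber G p]
    -- bad set is inside ker ψ
    have hsub : (Finset.univ.filter fun w => ¬ p (G w)) ⊆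
        (Finset.univ.filter fun w => ψ w = 0) := by
      intro w hw
      rw [Finset.mem_filter] at hw ⊢
      refine ⟨hw.1, ?_⟩
      by_contra h0
      exact hw.2 (hev w h0)
    have hkercard : (Finset.univ.filter fun w => ψ w = 0).card = q ^ (k - 1) := by
      have e : {w // w ∈ LinearMap.ker ψ} ≃ {w // ψ w = 0} :=
        Equiv.subtypeEquivRight (fun w => LinearMap.mem_ker)
      have h1 : Fintype.card (LinearMap.ker ψ) = (Finset.univ.filter fun w => ψ w = 0).card := by
        rw [Fintype.card_congr e, Fintype.card_subtype]
      have h2 : Fintype.card (LinearMap.ker ψ) = q ^ finrank F (LinearMap.ker ψ) := by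
        rw [← hq]; exact Module.card_eq_pow_finrank
      have h3 : finrank F (LinearMap.ker ψ) = k - 1 := by
        rw [finrank_ker_functional _ hψ0, Module.finrank_fin_fun]
      rw [← h1, h2, h3]
    have hcards := Finset.card_filter_add_card_filter_not
      (s := Finset.univ) (p := fun w => p (G w))
    rw [Finset.card_univ, cardW] at hcards
    have hbad : (Finset.univ.filter fun w => ¬ p (G w)).card ≤ q ^ (k - 1) := by
      rw [← hkercard]; exact Finset.card_le_card hsub
    have hgoodcard : q ^ k - q ^ (k-1) ≤ (Finset.univ.filter fun w => p (G w)).card := by omega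
    have hle : (q:ℝ) ^ k - (q:ℝ) ^ (k-1) ≤ ((Finset.univ.filter fun w => p (G w)).card : ℝ) := by
      have hmono : q ^ (k-1) ≤ q ^ k := Nat.pow_le_pow_right hq1 (by omega)
      have : ((q ^ k - q ^ (k-1) : ℕ) : ℝ) ≤ _ := Nat.cast_le.mpr hgoodcard
      rwa [Nat.cast_sub hmono, Nat.cast_pow, Nat.cast_pow] at this
    rw [le_div_iff₀ hN0]
    have hqk : (q:ℝ) ^ k = (q:ℝ) ^ (k-1) * q := by
      rw [← pow_succ]; congr 1; omega
    have heq : (1 - 1/(q:ℝ)) * N = (q:ℝ)^k - (q:ℝ)^(k-1) := by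
      rw [hN, hqk]; field_simp
    rw [heq]
    exact hle

end master

/-- There are an absolute constant `K > 0` and a threshold `q₀`
such that for all `q ≥ q₀`: given `k`-dimensional isotropic subspaces `A, B` of
`F_q^{2d}`, there is a randomized choice (a probability distribution `P`,
depending only on `A` and `B`) of a `(k−1)`-dimensional subspace `A' ⊆ A` and a
vector `b ∈ B` with `A' + span(b)` isotropic, such that for every `d₀`-dimensional
subspace `C` for which `A + C` and `B + C` are `(d₀+k)`-dimensional isotropic
subspaces, `Pr[dim(A' + span(b) + C) = d₀ + k] ≥ 1 − K/q`. -/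
theorem stmt15 : ∃ K : ℝ, 0 < K ∧ ∃ q₀ : ℕ,
    ∀ (q d k d₀ : ℕ) (F : Type) [Field F] [Fintype F],
      Fintype.card F = q → q₀ ≤ q → 1 ≤ k →
      ∀ A B : Submodule F ((Fin d ⊕ Fin d) → F),
        IsIsotropic F d A → IsIsotropic F d B →
        finrank F A = k → finrank F B = k →
        ∃ P : Submodule F ((Fin d ⊕ Fin d) → F) × ((Fin d ⊕ Fin d) → F) → ℝ,
          (∀ x, 0 ≤ P x) ∧
          (∑ᶠ x : Submodule F ((Fin d ⊕ Fin d) → F) × ((Fin d ⊕ Fin d) → F),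
            P x) = 1 ∧
          (∀ A' b, P (A', b) ≠ 0 →
            A' ≤ A ∧ finrank F A' = k - 1 ∧ b ∈ B ∧
            IsIsotropic F d (A' ⊔ Submodule.span F {b})) ∧
          (∀ C : Submodule F ((Fin d ⊕ Fin d) → F), finrank F C = d₀ →
            IsIsotropic F d (A ⊔ C) → finrank F ↥(A ⊔ C) = d₀ + k →
            IsIsotropic F d (B ⊔ C) → finrank F ↥(B ⊔ C) = d₀ + k →
            1 - K / (q : ℝ) ≤
              ∑ᶠ x : Submodule F ((Fin d ⊕ Fin d) → F) × ((Fin d ⊕ Fin d) → F),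
                if finrank F ↥(x.1 ⊔ Submodule.span F {x.2} ⊔ C) = d₀ + k
                  then P x else 0) := by
  refine ⟨1, one_pos, 1, ?_⟩
  intro q d k d₀ F _ _ hq hqq hk A B hA hB hAk hBk
  classical
  have hone : (1:ℝ) / (q:ℝ) = 1 / (q:ℝ) := rfl
  -- the symplectic complement of A
  set SympA : Submodule F ((Fin d ⊕ Fin d) → F) :=
    ⨅ a : A, LinearMap.ker (sympBilin F d a.1) with hSympA
  have hmemSymp : ∀ v, v ∈ SympA ↔ ∀ a ∈ A, sympForm F d a v = 0 := by
    intro v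
    rw [hSympA, Submodule.mem_iInf]
    constructor
    · intro h a ha
      exact LinearMap.mem_ker.mp (h ⟨a, ha⟩)
    · intro h a
      exact LinearMap.mem_ker.mpr (h a.1 a.2)
  have hi0 : (0:ℕ) < k := hk
  set i₀ : Fin k := ⟨0, hi0⟩ with hi₀
  have hproj : (LinearMap.proj i₀ : (Fin k → F) →ₗ[F] F) ≠ 0 := by
    intro h
    have := congrArg (fun f => f (Pi.single i₀ 1)) h
    simp at this
  by_cases hS : B ⊓ SympA = ⊥
  · -- Case 2 : B ∩ Symp(A) = 0, deterministic choice works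
    obtain ⟨b₀, hb₀B, hb₀0⟩ := (Submodule.ne_bot_iff B).mp (by
      intro h
      rw [h] at hBk
      simp [finrank_bot] at hBk
      omega)
    set f' : A →ₗ[F] F := ((sympBilin F d).flip b₀).comp A.subtype with hf'
    have hf'spec : ∀ y : A, f' y = sympForm F d y.1 b₀ := fun y => rfl
    have hf'0 : f' ≠ 0 := by
      intro h
      apply hb₀0
      have hmem : b₀ ∈ B ⊓ SympA := by
        refine Submodule.mem_inf.mpr ⟨hb₀B, (hmemSymp b₀).mpr ?_⟩
        intro a ha
        have := congrArg (fun g => g ⟨a, ha⟩) h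
        simpa [hf'spec] using this
      rwa [hS, Submodule.mem_bot] at hmem
    refine master hq hk A B hA hB hAk b₀ hb₀B hb₀0 (fun _ => f') (fun _ => hf'0)
      (fun w y hy => by rw [← hf'spec]; exact hy) ?_
    intro C hC hACiso hACrank hBCiso hBCrank
    refine ⟨LinearMap.proj i₀, hproj, ?_⟩
    intro w hw
    exfalso
    have hsub : Submodule.map A.subtype (LinearMap.ker ((fun _ => f') w)) ⊔ C ≤ SympA := by
      refine sup_le (le_trans (Submodule.map_subtype_le A _) ?_) ?_
      · intro v hv
        exact (hmemSymp v).mpr fun a ha => hA a ha v hv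
      · intro v hv
        exact (hmemSymp v).mpr fun a ha =>
          hACiso a (Submodule.mem_sup_left ha) v (Submodule.mem_sup_right hv)
    have : b₀ ∈ B ⊓ SympA := Submodule.mem_inf.mpr ⟨hb₀B, hsub hw⟩
    rw [hS, Submodule.mem_bot] at this
    exact hb₀0 this
  · -- Case 1 : B ∩ Symp(A) ≠ 0
    obtain ⟨b₀, hb₀mem, hb₀0⟩ := (Submodule.ne_bot_iff _).mp hS
    obtain ⟨hb₀B, hb₀S⟩ := Submodule.mem_inf.mp hb₀mem
    set e : Basis (Fin k) F A := finBasisOfFinrankEq F A hAk with he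
    set u : (Fin k → F) → (Fin k → F) := fun w => if w = 0 then Pi.single i₀ 1 else w with hu
    have hu0 : ∀ w, u w ≠ 0 := by
      intro w h
      simp only [hu] at h
      split_ifs at h with h'
      · have := congrFun h i₀
        simp at this
      · exact h' h
    set Φ : (Fin k → F) → (A →ₗ[F] F) := fun w => e.constr F (u w) with hΦdef
    have hΦ : ∀ w, Φ w ≠ 0 := by
      intro w h
      apply hu0 w
      funext i
      have := congrArg (fun g => g (e i)) h
      simpa [hΦdef, Basis.constr_basis] using this
    have hiso : ∀ w, ∀ y : A, Φ w y = 0 → sympForm F d (y : (Fin d ⊕ Fin d) → F) b₀ = 0 :=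
      fun w y _ => (hmemSymp b₀).mp hb₀S y.1 y.2
    refine master hq hk A B hA hB hAk b₀ hb₀B hb₀0 Φ hΦ hiso ?_
    intro C hC hACiso hACrank hBCiso hBCrank
    by_cases hmem : b₀ ∈ A ⊔ C
    · -- b₀ = a + c ; the bad event is a nontrivial linear condition
      obtain ⟨a, ha, c, hc, habc⟩ := Submodule.mem_sup.mp hmem
      have hBC : B ⊓ C = ⊥ := by
        have h1 := Submodule.finrank_sup_add_finrank_inf_eq B C
        rw [hBCrank, hBk, hC] at h1
        have : finrank F ↥(B ⊓ C) = 0 := by omega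
        exact Submodule.finrank_eq_zero.mp this
      have hAC : A ⊓ C = ⊥ := by
        have h1 := Submodule.finrank_sup_add_finrank_inf_eq A C
        rw [hACrank, hAk, hC] at h1
        have : finrank F ↥(A ⊓ C) = 0 := by omega
        exact Submodule.finrank_eq_zero.mp this
      have ha0 : a ≠ 0 := by
        intro h
        rw [h, zero_add] at habc
        apply hb₀0
        have : b₀ ∈ B ⊓ C := Submodule.mem_inf.mpr ⟨hb₀B, habc ▸ hc⟩
        rwa [hBC, Submodule.mem_bot] at this
      set aA : A := ⟨a, ha⟩ with haA
      have haA0 : aA ≠ 0 := fun h => ha0 (congrArg Subtype.val h)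
      set ψ : (Fin k → F) →ₗ[F] F :=
        (LinearMap.applyₗ aA).comp (e.constr F).toLinearMap with hψdef
      have hψspec : ∀ w, ψ w = e.constr F w aA := fun w => rfl
      have hψ0 : ψ ≠ 0 := by
        obtain ⟨i, hi⟩ : ∃ i, e.repr aA i ≠ 0 := by
          by_contra h
          push_neg at h
          apply haA0
          have : e.repr aA = 0 := Finsupp.ext h
          simpa using congrArg e.repr.symm this
        intro h
        apply hi
        have h2 : ψ (Pi.single i 1) = 0 := by rw [h]; rfl
        rw [hψspec, Basis.constr_apply_fintype] at h2
        simpa [Pi.single_apply, Basis.equivFun_apply] using h2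
      refine ⟨ψ, hψ0, ?_⟩
      intro w hw
      rcases eq_or_ne w 0 with rfl | hw0
      · simp
      · have huw : u w = w := if_neg hw0
        -- a ∈ A' w
        have haAw : a ∈ Submodule.map A.subtype (LinearMap.ker (Φ w)) ⊔ C := by
          have hcmem : c ∈ Submodule.map A.subtype (LinearMap.ker (Φ w)) ⊔ C :=
            Submodule.mem_sup_right hc
          have : a = b₀ - c := by rw [← habc]; ring
          rw [this]
          exact Submodule.sub_mem _ hw hcmem
        obtain ⟨a', ha', c', hc', habc'⟩ := Submodule.mem_sup.mp haAw
        have ha'A : a' ∈ A := Submodule.map_subtype_le A _ ha'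
        have hc'0 : c' = 0 := by
          have hc'A : c' ∈ A := by
            have : c' = a - a' := by rw [← habc']; ring
            rw [this]; exact Submodule.sub_mem _ ha ha'A
          have : c' ∈ A ⊓ C := Submodule.mem_inf.mpr ⟨hc'A, hc'⟩
          rwa [hAC, Submodule.mem_bot] at this
      -- so a = a' ∈ A' w, giving Φ w aA = 0
        have haa' : a ∈ Submodule.map A.subtype (LinearMap.ker (Φ w)) := by
          rw [hc'0, add_zero] at habc'
          rwa [← habc']
        obtain ⟨y, hy, hyval⟩ := Submodule.mem_map.mp haa'
        have hyaA : y = aA := Subtype.ext hyval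
        rw [hψspec, ← huw]
        show (e.constr F (u w)) aA = 0
        rw [← hyaA]
        exact LinearMap.mem_ker.mp hy
    · -- b₀ ∉ A ⊔ C : event always holds
      refine ⟨LinearMap.proj i₀, hproj, ?_⟩
      intro w hw
      exfalso
      apply hmem
      exact sup_le_sup_right (Submodule.map_subtype_le A _) C hw
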